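/- In a standard quasi-metric space X,d, if a directed family of formal balls (x_i, r_i) has supremum (x, r) in B(X,d), then r = inf_i r_i. -/

import Mathlib

open scoped ENNReal NNReal Classical

/-- A formal ball: a point together with a non-negative real radius. -/
structure FormalBall (X : Type*) where
  center : X
  radius : ℝ≥0

/-- A quasi-metric on `X`: a `[0,∞]`-valued distance with `d x x = 0`, the triangle
inequality, and `d x y = d y x = 0 → x = y`. -/
structure QuasiMetric (X : Type*) where
  d : X → X → ℝ≥0∞
  refl : ∀ x, d x x = 0
  triangle : ∀ x y z, d x z ≤ d x y + d y z
  separated : ∀ x y, d x y = 0 → d y x = 0 → x = y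

/-- The order on formal balls: `(x,r) ≤ (y,s)` iff `d x y ≤ r - s`
(equivalently `s ≤ r` and `d x y ≤ r - s`). -/
def ballLE {X : Type*} (q : QuasiMetric X) (b c : FormalBall X) : Prop :=
  c.radius ≤ b.radius ∧ q.d b.center c.center ≤ ↑(b.radius - c.radius)

/-- The partial order of formal balls `B(X,d)`. -/
def ballOrder {X : Type*} (q : QuasiMetric X) : PartialOrder (FormalBall X) where
  le := ballLE q
  le_refl b := ⟨le_rfl, by simp [ballLE, q.refl]⟩
  le_trans a b c hab hbc := ⟨hbc.1.trans hab.1, by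
    calc q.d a.center c.center ≤ q.d a.center b.center + q.d b.center c.center :=
          q.triangle _ _ _
      _ ≤ ↑(a.radius - b.radius) + ↑(b.radius - c.radius) := add_le_add hab.2 hbc.2
      _ = ↑(a.radius - c.radius) := by
          rw [← ENNReal.coe_add, tsub_add_tsub_cancel hab.1 hbc.1]⟩
  le_antisymm a b hab hba := by
    have hr : b.radius = a.radius := le_antisymm hab.1 hba.1
    have h1 : q.d a.center b.center = 0 := le_antisymm (by simpa [hr] using hab.2) bot_le
    have h2 : q.d b.center a.center = 0 := le_antisymm (by simpa [hr] using hba.2) bot_le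
    have hc := q.separated _ _ h1 h2
    cases a; cases b; simp_all

/-- Standardness: a directed family of formal balls has a supremum iff the family with all
radii uniformly shifted by `s` has one. -/
def Standard {X : Type*} (q : QuasiMetric X) : Prop :=
  letI := ballOrder q
  ∀ S : Set (FormalBall X), S.Nonempty → DirectedOn (· ≤ ·) S → ∀ s : ℝ≥0,
    ((∃ b, IsLUB S b) ↔
      ∃ b, IsLUB ((fun c : FormalBall X => FormalBall.mk c.center (c.radius + s)) '' S) b)

/-- in a standard quasi-metric space, if a directed family of formal balls
has supremum `(x,r)`, then `r` is the infimum of the radii. -/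
theorem radius_of_lub_eq_sInf {X : Type*} (q : QuasiMetric X) (hstd : Standard q)
    (S : Set (FormalBall X)) (hne : S.Nonempty)
    (hdir : letI := ballOrder q; DirectedOn (· ≤ ·) S)
    (b : FormalBall X) (hlub : letI := ballOrder q; IsLUB S b) :
    b.radius = sInf (FormalBall.radius '' S) := by
  letI := ballOrder q
  set ρ : ℝ≥0 := sInf (FormalBall.radius '' S) with hρ
  -- every radius in S is ≥ b.radius, and ≥ ρ
  have hub : ∀ c ∈ S, b.radius ≤ c.radius ∧ ρ ≤ c.radius := by
    intro c hc
    refine ⟨(hlub.1 hc).1, csInf_le (OrderBot.bddBelow _) ⟨c, hc, rfl⟩⟩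
  have hle : b.radius ≤ ρ := by
    apply le_csInf (hne.image _)
    rintro t ⟨c, hc, rfl⟩
    exact (hub c hc).1
  -- the family shifted down by ρ
  set f : FormalBall X → FormalBall X := fun c => ⟨c.center, c.radius - ρ⟩ with hf
  have hSne : (f '' S).Nonempty := hne.image _
  have hmono : ∀ c c' : FormalBall X, c' ∈ S → c ≤ c' → f c ≤ f c' := by
    rintro c c' hc' ⟨h1, h2⟩
    refine ⟨tsub_le_tsub_right h1 ρ, ?_⟩
    rwa [tsub_tsub_tsub_cancel_right (hub c' hc').2]
  have hSdir : DirectedOn (· ≤ ·) (f '' S) := by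
    rintro _ ⟨c, hc, rfl⟩ _ ⟨c', hc', rfl⟩
    obtain ⟨e, he, h1, h2⟩ := hdir c hc c' hc'
    exact ⟨f e, ⟨e, he, rfl⟩, hmono c e he h1, hmono c' e he h2⟩
  -- shifting back up by ρ recovers S
  have himg : ((fun c : FormalBall X => FormalBall.mk c.center (c.radius + ρ)) '' (f '' S)) = S := by
    rw [Set.image_image]
    apply Set.eq_of_subset_of_subset
    · rintro _ ⟨c, hc, rfl⟩
      simpa [f, tsub_add_cancel_of_le (hub c hc).2] using hc
    · intro c hc
      refine ⟨c, hc, ?_⟩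
      simp [f, tsub_add_cancel_of_le (hub c hc).2]
  -- standardness: the shifted-down family has a supremum
  obtain ⟨u, hu⟩ := (hstd (f '' S) hSne hSdir ρ).2 ⟨b, by rwa [himg]⟩
  -- (u.center, u.radius + ρ) is an upper bound of S
  have hub2 : (⟨u.center, u.radius + ρ⟩ : FormalBall X) ∈ upperBounds S := by
    intro c hc
    have h := hu.1 ⟨c, hc, rfl⟩
    obtain ⟨h1, h2⟩ := h
    constructor
    · have : u.radius ≤ c.radius - ρ := h1
      calc u.radius + ρ ≤ (c.radius - ρ) + ρ := add_le_add this le_rfl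
        _ = c.radius := tsub_add_cancel_of_le (hub c hc).2
    · show q.d c.center u.center ≤ _
      calc q.d c.center u.center ≤ ↑(c.radius - ρ - u.radius) := h2
        _ = ↑(c.radius - (u.radius + ρ)) := by rw [tsub_tsub, add_comm]
  have := (hlub.2 hub2).1
  exact le_antisymm hle (le_trans (le_add_self) this)
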